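/- Let G be a topological group acting continuously on a topological space X satisfying property (a): for every x ∈ X and every open neighborhood O of the identity in G there exists y ∈ X with x ∈ interior(closure(O·y)). Let O be a symmetric open neighborhood of the identity in G. If x ∈ interior(closure(O·z)) and x ∈ closure(O·y), then y ∈ closure((O*O)·z) and O·y ⊆ closure((O*O*O)·z). -/

import Mathlib

open Pointwise

theorem stmt10 {G X : Type*} [Group G] [TopologicalSpace G] [IsTopologicalGroup G]
    [TopologicalSpace X] [MulAction G X] [ContinuousSMul G X]
    (ha : ∀ (x : X) (O : Set G), IsOpen O → (1 : G) ∈ O →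
      ∃ y : X, x ∈ interior (closure ((fun g => g • y) '' O)))
    (O : Set G) (hO : IsOpen O) (hOe : (1 : G) ∈ O) (hOsym : O⁻¹ = O)
    (x y z : X)
    (hxz : x ∈ interior (closure ((fun g => g • z) '' O)))
    (hxy : x ∈ closure ((fun g => g • y) '' O)) :
    y ∈ closure ((fun g => g • z) '' (O * O)) ∧
    (fun g => g • y) '' O ⊆ closure ((fun g => g • z) '' (O * O * O)) := by
  -- find g ∈ O with g • y ∈ interior (closure (O • z))
  have hne : ((interior (closure ((fun g => g • z) '' O))) ∩
      ((fun g => g • y) '' O)).Nonempty := by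
    rw [mem_closure_iff] at hxy
    exact hxy _ isOpen_interior hxz
  obtain ⟨w, hw1, g, hgO, rfl⟩ := hne
  have hginv : g⁻¹ ∈ O := by rw [← hOsym]; exact Set.inv_mem_inv.mpr hgO
  have hgy : g • y ∈ closure ((fun g => g • z) '' O) := interior_subset hw1
  -- translation lemma
  have key : ∀ (a : G) (S T : Set G), a ∈ S → (∀ s ∈ S, ∀ t ∈ T, s * t ∈ S * T) →
      a • closure ((fun g => g • z) '' T) ⊆ closure ((fun g => g • z) '' (S * T)) := by
    intro a S T haS hmul
    rw [← closure_smul]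
    apply closure_mono
    rintro _ ⟨_, ⟨t, htT, rfl⟩, rfl⟩
    exact ⟨a * t, hmul a haS t htT, (smul_smul a t z).symm⟩
  have hy : y ∈ closure ((fun g => g • z) '' (O * O)) := by
    have := key g⁻¹ O O hginv (fun s hs t ht => Set.mul_mem_mul hs ht)
    have : g⁻¹ • (g • y) ∈ closure ((fun g => g • z) '' (O * O)) :=
      this ⟨g • y, hgy, rfl⟩
    simpa [inv_smul_smul] using this
  refine ⟨hy, ?_⟩
  rintro _ ⟨h, hhO, rfl⟩
  have := key h O (O * O) hhO (fun s hs t ht => Set.mul_mem_mul hs ht)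
  rw [show O * O * O = O * (O * O) from mul_assoc O O O]
  exact this ⟨y, hy, rfl⟩
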